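/- Let Γ be a finitely generated group with finite generating set S and let 𝒢 = {G_n}_{n∈ℕ} be a sofic approximation of Γ. If 𝒢 is hyperfinite, then Γ is amenable. -/

import Mathlib

open Filter Topology

/-- A graph sequence: finite connected graphs of uniformly bounded degree whose
number of vertices tends to infinity. -/
structure GraphSeq (V : ℕ → Type*) where
  G : ∀ n, SimpleGraph (V n)
  finite : ∀ n, Finite (V n)
  connected : ∀ n, (G n).Connected
  degBound : ℕ
  deg_le : ∀ n, ∀ x : V n, ((G n).neighborSet x).ncard ≤ degBound
  card_tendsto : Tendsto (fun n => Nat.card (V n)) atTop atTop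

/-- The edge number `e(𝒢) = liminf |E(G_n)|/|V(G_n)|`. -/
noncomputable def GraphSeq.edgeNumber {V : ℕ → Type*} (Gs : GraphSeq V) : ℝ :=
  liminf (fun n => (((Gs.G n).edgeSet.ncard : ℝ)) / (Nat.card (V n) : ℝ)) atTop

/-- Bi-Lipschitz equivalence `𝒢 ≃ ℋ` of graph sequences on the same vertex sets. -/
def GraphSeq.equivSeq {V : ℕ → Type*} (Gs Hs : GraphSeq V) : Prop :=
  ∃ L : ℕ, 0 < L ∧ ∀ n, ∀ x y : V n,
    (Hs.G n).dist x y ≤ L * (Gs.G n).dist x y ∧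
    (Gs.G n).dist x y ≤ L * (Hs.G n).dist x y

/-- The (combinatorial) cost `c(𝒢) = inf { e(ℋ) : ℋ ≃ 𝒢 }`. -/
noncomputable def GraphSeq.cost {V : ℕ → Type*} (Gs : GraphSeq V) : ℝ :=
  sInf { x : ℝ | ∃ Hs : GraphSeq V, Gs.equivSeq Hs ∧ x = Hs.edgeNumber }

/-- Coarse equivalence of graph sequences: a uniform `(A,A)`-quasi-isometry levelwise. -/
def coarseEquiv {V W : ℕ → Type*} (Gs : GraphSeq V) (Hs : GraphSeq W) : Prop :=
  ∃ A : ℝ, 0 < A ∧ ∀ n, ∃ f : V n → W n,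
    (∀ x y : V n,
      ((Gs.G n).dist x y : ℝ) / A - A ≤ ((Hs.G n).dist (f x) (f y) : ℝ) ∧
      ((Hs.G n).dist (f x) (f y) : ℝ) ≤ A * ((Gs.G n).dist x y : ℝ) + A) ∧
    (∀ w : W n, ∃ x : V n, ((Hs.G n).dist (f x) w : ℝ) ≤ A)

/-- Hyperfiniteness of a family of graphs. -/
def hyperfiniteFam {V : ℕ → Type*} (G : ∀ n, SimpleGraph (V n)) : Prop :=
  ∀ ε : ℝ, 0 < ε → ∃ K : ℕ, 0 < K ∧ ∃ E : ∀ n, Set (Sym2 (V n)),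
    (∀ n, E n ⊆ (G n).edgeSet) ∧
    limsup (fun n => (((E n).ncard : ℝ)) / (Nat.card (V n) : ℝ)) atTop < ε ∧
    ∀ n, ∀ x : V n, {y | ((G n).deleteEdges (E n)).Reachable x y}.ncard ≤ K

def GraphSeq.hyperfinite {V : ℕ → Type*} (Gs : GraphSeq V) : Prop :=
  hyperfiniteFam Gs.G

/-- Property A for a family of graphs. -/
def propertyAFam {V : ℕ → Type*} (G : ∀ n, SimpleGraph (V n)) : Prop :=
  ∀ ε : ℝ, 0 < ε → ∃ S : ℕ, 0 < S ∧ ∀ n, ∃ ξ : V n → V n → ℝ,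
    (∀ x, ∑ᶠ y, |ξ x y| = 1) ∧
    (∀ x y, ξ x y ≠ 0 → (G n).dist x y ≤ S) ∧
    (∀ x y, (G n).Adj x y → ∑ᶠ z, |ξ x z - ξ y z| < ε)

def GraphSeq.propertyA {V : ℕ → Type*} (Gs : GraphSeq V) : Prop :=
  propertyAFam Gs.G

/-- Property almost-A: one may delete a vanishing proportion of vertices to get property A. -/
def GraphSeq.almostA {V : ℕ → Type*} (Gs : GraphSeq V) : Prop :=
  ∃ V' : ∀ n, Set (V n),
    Tendsto (fun n => (((V' n).ncard : ℝ)) / (Nat.card (V n) : ℝ)) atTop (𝓝 0) ∧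
    propertyAFam (fun n => (Gs.G n).induce ((V' n)ᶜ))

/-- The set of edges of `G` with exactly one endpoint in `F`. -/
def edgeBoundary {V : Type*} (G : SimpleGraph V) (F : Set V) : Set (Sym2 V) :=
  {e | e ∈ G.edgeSet ∧ ∃ x y, e = s(x, y) ∧ x ∈ F ∧ y ∉ F}

/-- The Cayley graph of a group with respect to a set `S`. -/
def cayleyGraph (Γ : Type*) [Group Γ] (S : Set Γ) : SimpleGraph Γ :=
  SimpleGraph.fromRel (fun x y => ∃ s ∈ S, y = x * s)

/-- The simple graph underlying an `S`-labelled graph given by label maps `lab`. -/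
def labGraph {Γ V : Type*} (S : Set Γ) (lab : Γ → V → V) : SimpleGraph V :=
  SimpleGraph.fromRel (fun x y => ∃ s ∈ S, y = lab s x)

/-- Right multiplication by `s` on the right cosets of `H`. -/
def schreierMul {Γ : Type*} [Group Γ] (H : Subgroup Γ) (s : Γ) :
    Quotient (QuotientGroup.rightRel H) → Quotient (QuotientGroup.rightRel H) :=
  Quotient.map (fun g => g * s) (fun a b hab => by
    have h := (QuotientGroup.rightRel_apply).mp hab
    exact (QuotientGroup.rightRel_apply).mpr (by
      simpa [mul_assoc] using h))

/-- The Schreier graph `Sch(Γ, H, S)` on the right cosets of `H`. -/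
def schreierGraph {Γ : Type*} [Group Γ] (H : Subgroup Γ) (S : Set Γ) :
    SimpleGraph (Quotient (QuotientGroup.rightRel H)) :=
  labGraph S (fun s => schreierMul H s)

/-- The rooted labelled `r`-ball of the labelled graph `lab` at `x` is isomorphic to
the `r`-ball around the identity in `Cay(Γ, S)`. -/
def ballIso {Γ : Type*} [Group Γ] (S : Set Γ) {V : Type*} (lab : Γ → V → V)
    (x : V) (r : ℕ) : Prop :=
  ∃ f : Γ → V, f 1 = x ∧
    (∀ g g' : Γ, (cayleyGraph Γ S).dist 1 g ≤ r → (cayleyGraph Γ S).dist 1 g' ≤ r →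
      f g = f g' → g = g') ∧
    (∀ g : Γ, (cayleyGraph Γ S).dist 1 g < r → ∀ s ∈ S, f (g * s) = lab s (f g)) ∧
    (∀ v : V, (labGraph S lab).dist x v ≤ r →
      ∃ g : Γ, (cayleyGraph Γ S).dist 1 g ≤ r ∧ f g = v)

/-- Benjamini–Schramm convergence of the `S`-labelled graphs given by `lab` to `Cay(Γ, S)`. -/
def BSConv {Γ : Type*} [Group Γ] (S : Set Γ) {V : ℕ → Type*}
    (lab : ∀ n, Γ → V n → V n) : Prop :=
  ∀ r : ℕ, Tendsto
    (fun n => ((Nat.card {x : V n // ballIso S (lab n) x r} : ℝ)) / (Nat.card (V n) : ℝ))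
    atTop (𝓝 1)

/-- A sofic approximation of `Γ`: a graph sequence labelled by `S` which
Benjamini–Schramm converges to `Cay(Γ, S)`. -/
def IsSoficApprox {Γ : Type*} [Group Γ] (S : Set Γ) {V : ℕ → Type*} (Gs : GraphSeq V)
    (lab : ∀ n, Γ → V n → V n) : Prop :=
  (∀ n, Gs.G n = labGraph S (lab n)) ∧ BSConv S lab

/-- Amenability via Følner sets with respect to the generating set `S`. -/
def FolnerAmenable {Γ : Type*} [Group Γ] (S : Set Γ) : Prop :=
  ∀ ε : ℝ, 0 < ε → ∃ F : Set Γ, F.Finite ∧ F.Nonempty ∧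
    ∀ g ∈ S, ((symmDiff ((fun x => g * x) '' F) F).ncard : ℝ) < ε * (F.ncard : ℝ)

section AuxCounting
open SimpleGraph

lemma ncard_biUnion_le_mul {α β : Type*} [Finite β] {s : Set α} (hs : s.Finite)
    (t : α → Set β) (c : ℕ) (h : ∀ a ∈ s, (t a).ncard ≤ c) :
    (⋃ a ∈ s, t a).ncard ≤ s.ncard * c := by
  classical
  induction s, hs using Set.Finite.induction_on with
  | empty => simp
  | insert ha hsf ih =>
    rename_i a s'
    have h1 : (⋃ x ∈ insert a s', t x) = t a ∪ ⋃ x ∈ s', t x := by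
      simp [Set.biUnion_insert]
    rw [h1]
    calc (t a ∪ ⋃ x ∈ s', t x).ncard ≤ (t a).ncard + (⋃ x ∈ s', t x).ncard :=
          Set.ncard_union_le _ _
      _ ≤ c + s'.ncard * c := by
          gcongr
          · exact h a (Set.mem_insert _ _)
          · exact ih (fun x hx => h x (Set.mem_insert_of_mem _ hx))
      _ = (s'.ncard + 1) * c := by ring
      _ = (insert a s').ncard * c := by rw [Set.ncard_insert_of_notMem ha hsf]

lemma reachSet_bound {V : Type} [Finite V] (G : SimpleGraph V) (D : ℕ)
    (hdeg : ∀ x, (G.neighborSet x).ncard ≤ D) :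
    ∀ (m : ℕ) (x : V), {y | ∃ p : G.Walk x y, p.length ≤ m}.ncard ≤ (D+1)^m := by
  intro m
  induction m with
  | zero =>
    intro x
    have hsub : {y | ∃ p : G.Walk x y, p.length ≤ 0} ⊆ {x} := by
      rintro y ⟨p, hp⟩
      have := Walk.eq_of_length_eq_zero (Nat.le_zero.mp hp)
      simp [this.symm]
    calc _ ≤ ({x} : Set V).ncard := Set.ncard_le_ncard hsub (Set.toFinite _)
      _ = 1 := Set.ncard_singleton x
      _ = (D+1)^0 := by simp
  | succ m ih =>
    intro x
    have hsub : {y | ∃ p : G.Walk x y, p.length ≤ m+1} ⊆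
        {x} ∪ ⋃ z ∈ G.neighborSet x, {y | ∃ p : G.Walk z y, p.length ≤ m} := by
      rintro y ⟨p, hp⟩
      cases p with
      | nil => exact Or.inl rfl
      | cons h q =>
        right
        rw [Walk.length_cons] at hp
        exact Set.mem_biUnion h ⟨q, by omega⟩
    have hU : (⋃ z ∈ G.neighborSet x, {y | ∃ p : G.Walk z y, p.length ≤ m}).ncard
        ≤ (G.neighborSet x).ncard * (D+1)^m :=
      ncard_biUnion_le_mul (Set.toFinite _) _ _ (fun z _ => ih z)
    have h1 : 1 ≤ (D+1)^m := Nat.one_le_pow _ _ (by omega)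
    calc _ ≤ ({x} : Set V).ncard + _ := le_trans (Set.ncard_le_ncard hsub (Set.toFinite _))
            (Set.ncard_union_le _ _)
      _ ≤ 1 + D * (D+1)^m := by
          gcongr
          · simp
          · exact le_trans hU (by gcongr; exact hdeg x)
      _ ≤ (D+1)^m + D * (D+1)^m := by omega
      _ = (D+1)^(m+1) := by ring

lemma edge_density_bound {V : Type} [Finite V] (G : SimpleGraph V) (D : ℕ)
    (hdeg : ∀ x, (G.neighborSet x).ncard ≤ D) (En : Set (Sym2 V)) (hsub : En ⊆ G.edgeSet) :
    ((En.ncard : ℝ)) / (Nat.card V : ℝ) ≤ D := by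
  classical
  rcases isEmpty_or_nonempty V with hV | hV
  · have : En = ∅ := Set.eq_empty_of_isEmpty En
    simp [this]
  · haveI := Fintype.ofFinite V
    have hcard : 0 < (Nat.card V : ℝ) := by
      have : 0 < Nat.card V := Nat.card_pos
      exact_mod_cast this
    rw [div_le_iff₀ hcard]
    have hE : En.ncard ≤ D * Nat.card V := by
      have h1 : En.ncard ≤ G.edgeSet.ncard := Set.ncard_le_ncard hsub (Set.toFinite _)
      have h2 : 2 * G.edgeFinset.card = ∑ v, G.degree v :=
        (SimpleGraph.sum_degrees_eq_twice_card_edges G).symm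
      have h3 : ∑ v, G.degree v ≤ ∑ _v : V, D := by
        apply Finset.sum_le_sum
        intro v _
        have : G.degree v = (G.neighborSet v).ncard := by
          rw [← SimpleGraph.card_neighborSet_eq_degree, ← Nat.card_coe_set_eq,
            Nat.card_eq_fintype_card]
        rw [this]; exact hdeg v
      have h4 : G.edgeSet.ncard = G.edgeFinset.card := by
        rw [← Nat.card_coe_set_eq, Nat.card_eq_fintype_card]
        exact (Set.toFinset_card _).symm
      have h5 : ∑ _v : V, D = Fintype.card V * D := by
        rw [Finset.sum_const, Finset.card_univ, smul_eq_mul]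
      have h7 : Fintype.card V * D = D * Nat.card V := by
        rw [Nat.card_eq_fintype_card, mul_comm]
      omega
    calc ((En.ncard : ℝ)) ≤ (D * Nat.card V : ℕ) := by exact_mod_cast hE
      _ = (D : ℝ) * (Nat.card V : ℝ) := by push_cast; ring

lemma card_multi_add_card_range_le {α : Type} [Finite α] (f : α → α) :
    ({u | ∃ v w, v ≠ w ∧ f v = u ∧ f w = u}).ncard + (Set.range f).ncard ≤ Nat.card α := by
  classical
  set M : Set α := {u | ∃ v w, v ≠ w ∧ f v = u ∧ f w = u} with hM
  have hMsub : ∀ u : M, (u : α) ∈ Set.range f := by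
    rintro ⟨u, v, w, hvw, hv, hw⟩
    exact ⟨v, hv⟩
  have hc1 : ∀ u : Set.range f, ∃ v, f v = u := fun u => u.2
  choose c1 hc1' using hc1
  have hsel2 : ∀ u : M, ∃ v, f v = u ∧ v ≠ c1 ⟨u, hMsub u⟩ := by
    rintro ⟨u, hu⟩
    obtain ⟨v, w, hvw, hv, hw⟩ := hu
    by_cases hvc : v = c1 ⟨u, hMsub ⟨u, v, w, hvw, hv, hw⟩⟩
    · exact ⟨w, hw, by rw [← hvc]; exact fun h => hvw h.symm⟩
    · exact ⟨v, hv, hvc⟩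
  choose c2 hc2 hc2ne using hsel2
  have hinj : Function.Injective (Sum.elim c2 c1 : M ⊕ Set.range f → α) := by
    rintro (a | a) (b | b) h <;> simp only [Sum.elim_inl, Sum.elim_inr] at h
    · have hab : (a : α) = (b : α) := by rw [← hc2 a, ← hc2 b, h]
      exact congrArg Sum.inl (Subtype.ext hab)
    · exfalso
      have hab : (a : α) = (b : α) := by rw [← hc2 a, ← hc1' b, h]
      have hb : b = ⟨(a : α), hMsub a⟩ := Subtype.ext hab.symm
      exact hc2ne a (by rw [h, hb])
    · exfalso
      have hab : (b : α) = (a : α) := by rw [← hc2 b, ← hc1' a, h]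
      have ha : a = ⟨(b : α), hMsub b⟩ := Subtype.ext hab.symm
      exact hc2ne b (by rw [← h, ha])
    · have hab : (a : α) = (b : α) := by rw [← hc1' a, ← hc1' b, h]
      exact congrArg Sum.inr (Subtype.ext hab)
  have hle := Nat.card_le_card_of_injective _ hinj
  rwa [Nat.card_sum, Nat.card_coe_set_eq, Nat.card_coe_set_eq] at hle

lemma exists_small_boundary {V : Type} [Finite V] (H : SimpleGraph V) (En : Set (Sym2 V))
    (X : Set V) (hXne : X.Nonempty) (ε : ℝ) (hε : 0 < ε)
    (hcount : 2 * (En.ncard : ℝ) ≤ ε / 4 * (X.ncard : ℝ)) :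
    ∃ x ∈ X, (({e | e ∈ En ∧ ∃ a, a ∈ e ∧ H.Reachable x a}.ncard : ℝ))
      ≤ ε / 4 * ({y | H.Reachable x y}.ncard : ℝ) := by
  classical
  haveI := Fintype.ofFinite V
  by_contra hcon
  push_neg at hcon
  set EF : Finset (Sym2 V) := (Set.toFinite En).toFinset with hEF
  set C : V → Set V := fun x => {y | H.Reachable x y} with hC
  set P : V → Sym2 V → Prop := fun x e => ∃ a, a ∈ e ∧ H.Reachable x a with hP
  set t : V → ℝ := fun x => ∑ e ∈ EF, if P x e then ((C x).ncard : ℝ)⁻¹ else 0 with ht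
  have hCmem : ∀ x, x ∈ C x := fun x => Reachable.refl x
  have hCpos : ∀ x, 0 < ((C x).ncard : ℝ) := by
    intro x
    have : 0 < (C x).ncard := (Set.ncard_pos (Set.toFinite _)).mpr ⟨x, hCmem x⟩
    exact_mod_cast this
  have ht0 : ∀ x, 0 ≤ t x := by
    intro x
    apply Finset.sum_nonneg
    intro e _
    split
    · positivity
    · exact le_refl 0
  have htx : ∀ x, t x = ((EF.filter (P x)).card : ℝ) * ((C x).ncard : ℝ)⁻¹ := by
    intro x
    show (∑ e ∈ EF, if P x e then ((C x).ncard : ℝ)⁻¹ else 0) = _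
    rw [← Finset.sum_filter, Finset.sum_const, nsmul_eq_mul]
  have hBeq : ∀ x, ({e | e ∈ En ∧ P x e} : Set (Sym2 V)).ncard = (EF.filter (P x)).card := by
    intro x
    rw [← Set.ncard_coe_finset]
    congr 1
    ext e
    simp only [Set.mem_setOf_eq, Finset.coe_filter, hEF, Set.Finite.mem_toFinset]
  have hlow : ∀ x ∈ X, ε / 4 < t x := by
    intro x hx
    have h1 : ε / 4 * ((C x).ncard : ℝ) < (({e | e ∈ En ∧ P x e} : Set (Sym2 V)).ncard : ℝ) :=
      hcon x hx
    rw [hBeq x] at h1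
    rw [htx x, ← div_eq_mul_inv, lt_div_iff₀ (hCpos x)]
    exact h1
  have hup : ∀ e : Sym2 V, (∑ x : V, if P x e then ((C x).ncard : ℝ)⁻¹ else 0) ≤ 2 := by
    intro e
    induction e using Sym2.ind with
    | _ a b =>
      have hsub : Finset.univ.filter (fun x => P x s(a,b)) ⊆
          (Set.toFinite (C a)).toFinset ∪ (Set.toFinite (C b)).toFinset := by
        intro x hx
        simp only [Finset.mem_filter, hP] at hx
        obtain ⟨-, c, hce, hreach⟩ := hx
        rcases Sym2.mem_iff.mp hce with rfl | rfl
        · exact Finset.mem_union_left _ (by rw [Set.Finite.mem_toFinset]; exact hreach.symm)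
        · exact Finset.mem_union_right _ (by rw [Set.Finite.mem_toFinset]; exact hreach.symm)
      have hsum1 : ∀ y : V, ∀ x ∈ (Set.toFinite (C y)).toFinset,
          ((C x).ncard : ℝ)⁻¹ = ((C y).ncard : ℝ)⁻¹ := by
        intro y x hx
        rw [Set.Finite.mem_toFinset] at hx
        have hyx : H.Reachable y x := hx
        have hCeq : C x = C y := by
          ext z
          exact ⟨fun hz => hyx.trans hz, fun hz => hyx.symm.trans hz⟩
        rw [hCeq]
      have hone : ∀ y : V, (∑ x ∈ (Set.toFinite (C y)).toFinset, ((C x).ncard : ℝ)⁻¹) = 1 := by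
        intro y
        rw [Finset.sum_congr rfl (hsum1 y), Finset.sum_const, nsmul_eq_mul]
        rw [Set.ncard_eq_toFinset_card (C y) (Set.toFinite _)]
        have hpos : 0 < ((Set.toFinite (C y)).toFinset.card) :=
          Finset.card_pos.mpr ⟨y, by rw [Set.Finite.mem_toFinset]; exact hCmem y⟩
        exact mul_inv_cancel₀ (by exact_mod_cast hpos.ne')
      calc (∑ x : V, if P x s(a,b) then ((C x).ncard : ℝ)⁻¹ else 0)
          = ∑ x ∈ Finset.univ.filter (fun x => P x s(a,b)), ((C x).ncard : ℝ)⁻¹ :=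
            (Finset.sum_filter _ _).symm
        _ ≤ ∑ x ∈ (Set.toFinite (C a)).toFinset ∪ (Set.toFinite (C b)).toFinset,
              ((C x).ncard : ℝ)⁻¹ := by
            apply Finset.sum_le_sum_of_subset_of_nonneg hsub
            intro x _ _
            positivity
        _ ≤ (∑ x ∈ (Set.toFinite (C a)).toFinset, ((C x).ncard : ℝ)⁻¹)
            + ∑ x ∈ (Set.toFinite (C b)).toFinset, ((C x).ncard : ℝ)⁻¹ := by
            have h := Finset.sum_union_inter (s₁ := (Set.toFinite (C a)).toFinset)
              (s₂ := (Set.toFinite (C b)).toFinset) (f := fun x => ((C x).ncard : ℝ)⁻¹)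
            have h2 : 0 ≤ ∑ x ∈ (Set.toFinite (C a)).toFinset ∩ (Set.toFinite (C b)).toFinset,
                ((C x).ncard : ℝ)⁻¹ := Finset.sum_nonneg (fun x _ => by positivity)
            linarith
        _ = 2 := by rw [hone a, hone b]; norm_num
  have hup2 : (∑ x : V, t x) ≤ 2 * (EF.card : ℝ) := by
    have : (∑ x : V, t x) = ∑ e ∈ EF, ∑ x : V, (if P x e then ((C x).ncard : ℝ)⁻¹ else 0) := by
      rw [ht]
      exact Finset.sum_comm
    rw [this]
    calc (∑ e ∈ EF, ∑ x : V, (if P x e then ((C x).ncard : ℝ)⁻¹ else 0))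
        ≤ ∑ _e ∈ EF, (2:ℝ) := Finset.sum_le_sum (fun e _ => hup e)
      _ = EF.card * 2 := by rw [Finset.sum_const, nsmul_eq_mul]
      _ = 2 * EF.card := by ring
  have hXF : (Set.toFinite X).toFinset.Nonempty :=
    ⟨hXne.choose, by rw [Set.Finite.mem_toFinset]; exact hXne.choose_spec⟩
  have hlow2 : ε / 4 * (X.ncard : ℝ) < ∑ x : V, t x := by
    calc ε / 4 * (X.ncard : ℝ) = ∑ _x ∈ (Set.toFinite X).toFinset, (ε/4) := by
          rw [Finset.sum_const, nsmul_eq_mul, Set.ncard_eq_toFinset_card X (Set.toFinite X)]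
          ring
      _ < ∑ x ∈ (Set.toFinite X).toFinset, t x := by
          apply Finset.sum_lt_sum_of_nonempty hXF
          intro x hx
          exact hlow x (by rwa [Set.Finite.mem_toFinset] at hx)
      _ ≤ ∑ x : V, t x := by
          apply Finset.sum_le_sum_of_subset_of_nonneg (Finset.subset_univ _)
          intro x _ _
          exact ht0 x
  have hEcard : (En.ncard : ℝ) = (EF.card : ℝ) := by
    rw [Set.ncard_eq_toFinset_card En (Set.toFinite En)]
  linarith

end AuxCounting

section Aux
open SimpleGraph

variable {Γ : Type} [Group Γ] {S : Set Γ}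

lemma cayley_adj_mul {s : Γ} (hs : s ∈ S) (hs1 : s ≠ 1) (g : Γ) :
    (cayleyGraph Γ S).Adj g (g * s) := by
  simp only [cayleyGraph, SimpleGraph.fromRel_adj]
  exact ⟨fun h => hs1 (left_eq_mul.mp h), Or.inl ⟨s, hs, rfl⟩⟩

lemma cayley_adj_mul_inv {s : Γ} (hs : s ∈ S) (hs1 : s ≠ 1) (g : Γ) :
    (cayleyGraph Γ S).Adj g (g * s⁻¹) := by
  simp only [cayleyGraph, SimpleGraph.fromRel_adj]
  refine ⟨fun h => hs1 (inv_eq_one.mp (left_eq_mul.mp h)), Or.inr ⟨s, hs, by group⟩⟩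

lemma cayley_adj_left {a x y : Γ} (h : (cayleyGraph Γ S).Adj x y) :
    (cayleyGraph Γ S).Adj (a * x) (a * y) := by
  simp only [cayleyGraph, SimpleGraph.fromRel_adj] at h ⊢
  obtain ⟨hne, h | h⟩ := h
  · exact ⟨fun he => hne (mul_left_cancel he), Or.inl (by
      obtain ⟨s, hs, rfl⟩ := h; exact ⟨s, hs, by rw [mul_assoc]⟩)⟩
  · exact ⟨fun he => hne (mul_left_cancel he), Or.inr (by
      obtain ⟨s, hs, rfl⟩ := h; exact ⟨s, hs, by rw [mul_assoc]⟩)⟩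

lemma cayley_walk_mul {a u v : Γ} (w : (cayleyGraph Γ S).Walk u v) :
    (cayleyGraph Γ S).Reachable (a * u) (a * v) := by
  induction w with
  | nil => exact Reachable.refl _
  | cons h q ih => exact ((cayley_adj_left h).reachable).trans ih

lemma cayley_reachable (hSgen : Subgroup.closure S = ⊤) (g : Γ) :
    (cayleyGraph Γ S).Reachable 1 g := by
  have hg : g ∈ Subgroup.closure S := by rw [hSgen]; trivial
  refine Subgroup.closure_induction ?_ ?_ ?_ ?_ hg
  · intro x hx
    by_cases hx1 : x = 1
    · subst hx1; exact Reachable.refl _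
    · have h := cayley_adj_mul (S := S) hx hx1 1
      rw [one_mul] at h
      exact h.reachable
  · exact Reachable.refl _
  · intro x y _ _ hx hy
    refine hx.trans ?_
    obtain ⟨w⟩ := hy
    have h := cayley_walk_mul (a := x) w
    rwa [mul_one] at h
  · intro x _ hx
    obtain ⟨w⟩ := hx
    have h := cayley_walk_mul (a := x⁻¹) w
    rw [mul_one, inv_mul_cancel] at h
    exact h.symm

lemma cayley_dist_mul_le (hSgen : Subgroup.closure S = ⊤) {s : Γ} (hs : s ∈ S) (g : Γ) :
    (cayleyGraph Γ S).dist 1 (g * s) ≤ (cayleyGraph Γ S).dist 1 g + 1 := by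
  by_cases hs1 : s = 1
  · subst hs1; rw [mul_one]; omega
  · obtain ⟨p, hp⟩ := (cayley_reachable hSgen g).exists_walk_length_eq_dist
    have h := SimpleGraph.dist_le (p.concat (cayley_adj_mul hs hs1 g))
    rwa [Walk.length_concat, hp] at h

lemma cayley_dist_mul_inv_le (hSgen : Subgroup.closure S = ⊤) {s : Γ} (hs : s ∈ S) (g : Γ) :
    (cayleyGraph Γ S).dist 1 (g * s⁻¹) ≤ (cayleyGraph Γ S).dist 1 g + 1 := by
  by_cases hs1 : s = 1
  · subst hs1; rw [inv_one, mul_one]; omega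
  · obtain ⟨p, hp⟩ := (cayley_reachable hSgen g).exists_walk_length_eq_dist
    have h := SimpleGraph.dist_le (p.concat (cayley_adj_mul_inv hs hs1 g))
    rwa [Walk.length_concat, hp] at h

lemma cayley_dist_inv_gen_le (hSgen : Subgroup.closure S = ⊤) {s : Γ} (hs : s ∈ S) :
    (cayleyGraph Γ S).dist 1 s⁻¹ ≤ 1 := by
  have h := cayley_dist_mul_inv_le hSgen hs 1
  rwa [one_mul, SimpleGraph.dist_self] at h

lemma good_mem_range (hSgen : Subgroup.closure S = ⊤) {V : Type} {lab : Γ → V → V} {u : V}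
    {K : ℕ} (hK : 0 < K) (hgood : ballIso S lab u (K+1)) {s : Γ} (hs : s ∈ S) :
    ∃ v, lab s v = u := by
  obtain ⟨f, hf1, _, hcompat, _⟩ := hgood
  refine ⟨f s⁻¹, ?_⟩
  have hd := cayley_dist_inv_gen_le hSgen hs
  have h := hcompat s⁻¹ (by omega) s hs
  rw [inv_mul_cancel, hf1] at h
  exact h.symm

lemma good_lab_one {V : Type} {lab : Γ → V → V} {u : V} {K : ℕ}
    (hgood : ballIso S lab u (K+1)) (h1 : (1:Γ) ∈ S) : lab 1 u = u := by
  obtain ⟨f, hf1, _, hcompat, _⟩ := hgood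
  have h := hcompat 1 (by rw [SimpleGraph.dist_self]; omega) 1 h1
  rw [mul_one, hf1] at h
  exact h.symm

end Aux

section Key2
open SimpleGraph

lemma key2 {Γ : Type} [Group Γ] (S : Set Γ) (hSgen : Subgroup.closure S = ⊤)
    {V : Type} [Finite V] (lab : Γ → V → V) (K : ℕ) (hK : 0 < K)
    (En : Set (Sym2 V)) (x₀ : V)
    (hCK : {y | ((labGraph S lab).deleteEdges En).Reachable x₀ y}.ncard ≤ K)
    (hexc : ∀ u, (labGraph S lab).dist x₀ u ≤ K →
      (ballIso S lab u (K+1) ∧ ∀ s ∈ S, ∀ v w : V, lab s v = u → lab s w = u → v = w))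
    (ε : ℝ) (hε : 0 < ε)
    (hbound : (({e | e ∈ En ∧ ∃ a, a ∈ e ∧
        ((labGraph S lab).deleteEdges En).Reachable x₀ a} : Set (Sym2 V)).ncard : ℝ)
      ≤ ε / 4 * ({y | ((labGraph S lab).deleteEdges En).Reachable x₀ y}.ncard : ℝ)) :
    ∃ F : Set Γ, F.Finite ∧ F.Nonempty ∧
      ∀ g ∈ S, ((symmDiff ((fun x => g * x) '' F) F).ncard : ℝ) < ε * (F.ncard : ℝ) := by
  classical
  set G : SimpleGraph V := labGraph S lab with hGdef
  set H : SimpleGraph V := G.deleteEdges En with hHdef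
  set C : Set V := {y | H.Reachable x₀ y} with hCdef
  obtain ⟨hgood₀, -⟩ := hexc x₀ (by rw [SimpleGraph.dist_self]; omega)
  obtain ⟨f, hf1, hfinj, hfcompat, -⟩ := hgood₀
  have hCx₀ : x₀ ∈ C := Reachable.refl x₀
  have hCfin : C.Finite := Set.toFinite _
  have hCadj : ∀ {u v : V}, u ∈ C → H.Adj u v → v ∈ C :=
    fun hu h => Reachable.trans hu h.reachable
  -- every element of C is reachable from x₀ by a short walk in H
  have hCwalk : ∀ v ∈ C, ∃ r : H.Walk v x₀, r.length ≤ K - 1 := by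
    intro v hv
    obtain ⟨w⟩ := (hv : H.Reachable x₀ v)
    set p : H.Walk x₀ v := w.toPath.1 with hpdef
    have hsup : ∀ y ∈ p.support, y ∈ C := by
      intro y hy
      exact ⟨p.takeUntil y hy⟩
    have hnodup : p.support.Nodup := w.toPath.2.support_nodup
    have h1 : p.support.toFinset.card = p.support.length :=
      List.toFinset_card_of_nodup hnodup
    have h2 : p.support.toFinset ⊆ hCfin.toFinset := by
      intro y hy
      rw [Set.Finite.mem_toFinset]
      exact hsup y (List.mem_toFinset.mp hy)
    have h3 := Finset.card_le_card h2
    have h4 : hCfin.toFinset.card = C.ncard := (Set.ncard_eq_toFinset_card C hCfin).symm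
    have h5 : p.support.length = p.length + 1 := Walk.length_support p
    refine ⟨p.reverse, ?_⟩
    rw [Walk.length_reverse]
    omega
  -- G-distance from x₀ bounded via H-walks
  have hdistG : ∀ {v : V} (r : H.Walk v x₀), G.dist x₀ v ≤ r.length := by
    intro v r
    have h := SimpleGraph.dist_le ((r.mapLe (SimpleGraph.deleteEdges_le En)).reverse)
    rwa [Walk.length_reverse, Walk.length_map] at h
  -- the lifting lemma
  have hlift : ∀ (m : ℕ) (v : V) (r : H.Walk v x₀), r.length = m → m ≤ K - 1 →
      ∃ g : Γ, (cayleyGraph Γ S).dist 1 g ≤ r.length ∧ f g = v := by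
    intro m
    induction m using Nat.strong_induction_on with
    | _ m ih =>
    intro v r hrm hlen
    cases r with
    | nil => exact ⟨1, by rw [SimpleGraph.dist_self]; exact Nat.zero_le _, hf1⟩
    | @cons _ u _ h r' =>
      rw [Walk.length_cons] at hrm
      subst hrm
      obtain ⟨g, hgd, hgf⟩ := ih r'.length (by omega) u r' rfl (by omega)
      have hdu : G.dist x₀ u ≤ K := by
        have h1 := hdistG r'
        omega
      have hdv : G.dist x₀ v ≤ K := by
        have h1 := hdistG (Walk.cons h r')
        rw [Walk.length_cons] at h1
        omega
      obtain ⟨hugood, huuniq⟩ := hexc u hdu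
      obtain ⟨hvgood, -⟩ := hexc v hdv
      have hGadj : G.Adj v u := (SimpleGraph.deleteEdges_adj.mp h).1
      have hadj' : v ≠ u ∧ ((∃ s ∈ S, u = lab s v) ∨ (∃ s ∈ S, v = lab s u)) := by
        have h2 := hGadj
        rw [hGdef] at h2
        simpa [labGraph, SimpleGraph.fromRel_adj] using h2
      obtain ⟨hvu, hcase⟩ := hadj'
      rcases hcase with ⟨s, hs, hueq⟩ | ⟨s, hs, hveq⟩
      · -- u = lab s v  (backward edge)
        have hs1 : s ≠ 1 := by
          rintro rfl
          exact hvu (hueq.trans (good_lab_one hvgood hs)).symm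
        refine ⟨g * s⁻¹, ?_, ?_⟩
        · have := cayley_dist_mul_inv_le hSgen hs g
          rw [Walk.length_cons]
          omega
        · have hd' : (cayleyGraph Γ S).dist 1 (g * s⁻¹) ≤ r'.length + 1 := by
            have := cayley_dist_mul_inv_le hSgen hs g
            omega
          have hcomp := hfcompat (g * s⁻¹) (by omega) s hs
          have hg's : g * s⁻¹ * s = g := by group
          rw [hg's, hgf] at hcomp
          exact huuniq s hs (f (g * s⁻¹)) v hcomp.symm hueq.symm
      · -- v = lab s u  (forward edge)
        have hs1 : s ≠ 1 := by
          rintro rfl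
          exact hvu (hveq.trans (good_lab_one hugood hs))
        refine ⟨g * s, ?_, ?_⟩
        · have := cayley_dist_mul_le hSgen hs g
          rw [Walk.length_cons]
          omega
        · have hc := hfcompat g (by omega) s hs
          rw [hgf] at hc
          rw [hc, ← hveq]
  -- the set W of short preimages of C
  set W : Set Γ := {g | (cayleyGraph Γ S).dist 1 g ≤ K - 1 ∧ f g ∈ C} with hWdef
  have hWf : ∀ v ∈ C, ∃ g ∈ W, f g = v := by
    intro v hv
    obtain ⟨r, hr⟩ := hCwalk v hv
    obtain ⟨g, hgd, hgf⟩ := hlift r.length v r rfl hr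
    exact ⟨g, ⟨le_trans hgd hr, by rw [hgf]; exact hv⟩, hgf⟩
  have hfinj' : ∀ g₁ g₂ : Γ, (cayleyGraph Γ S).dist 1 g₁ ≤ K →
      (cayleyGraph Γ S).dist 1 g₂ ≤ K → f g₁ = f g₂ → g₁ = g₂ :=
    fun g₁ g₂ h1 h2 h => hfinj g₁ g₂ (by omega) (by omega) h
  have himg : f '' W = C := by
    apply Set.Subset.antisymm
    · rintro _ ⟨g, hg, rfl⟩
      exact hg.2
    · intro v hv
      obtain ⟨g, hg, hgf⟩ := hWf v hv
      exact ⟨g, hg, hgf⟩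
  have hWinjOn : Set.InjOn f W := fun a ha b hb h =>
    hfinj' a b (le_trans ha.1 (by omega)) (le_trans hb.1 (by omega)) h
  have hWfin : W.Finite := Set.Finite.of_finite_image (himg ▸ hCfin) hWinjOn
  have hWcard : W.ncard = C.ncard := by
    rw [← himg, Set.ncard_image_of_injOn hWinjOn]
  set F : Set Γ := (fun x : Γ => x⁻¹) '' W with hFdef
  have hFmem : ∀ x : Γ, x ∈ F ↔ x⁻¹ ∈ W := by
    intro x
    constructor
    · rintro ⟨y, hy, rfl⟩
      rwa [inv_inv]
    · intro h
      exact ⟨x⁻¹, h, inv_inv x⟩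
  have hFfin : F.Finite := hWfin.image _
  have hFcard : F.ncard = C.ncard := by
    rw [hFdef, Set.ncard_image_of_injOn (Set.injOn_of_injective inv_injective), hWcard]
  have hCpos : 1 ≤ C.ncard := by
    have := (Set.ncard_pos hCfin).mpr ⟨x₀, hCx₀⟩
    omega
  have hFpos : (0:ℝ) < (F.ncard : ℝ) := by
    rw [hFcard]
    exact_mod_cast hCpos
  have h1W : (1:Γ) ∈ W := ⟨by rw [SimpleGraph.dist_self]; omega, by rw [hf1]; exact hCx₀⟩
  refine ⟨F, hFfin, ⟨1, (hFmem 1).mpr (by rw [inv_one]; exact h1W)⟩, ?_⟩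
  intro s hs
  by_cases hs1 : s = 1
  · subst hs1
    have himgF : (fun x : Γ => 1 * x) '' F = F := by
      simp [one_mul, Set.image_id']
    rw [himgF, symmDiff_self]
    have : ((⊥ : Set Γ).ncard : ℝ) = 0 := by
      simp [Set.bot_eq_empty]
    rw [this]
    exact mul_pos hε hFpos
  -- s ≠ 1 : boundary-edge arguments
  set BD : Set (Sym2 V) := {e | e ∈ En ∧ ∃ a, a ∈ e ∧ H.Reachable x₀ a} with hBDdef
  have hBDfin : BD.Finite := Set.toFinite _
  have hnotinC : ∀ x : Γ, (cayleyGraph Γ S).dist 1 x ≤ K → x ∉ W → f x ∉ C := by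
    intro x hdx hxnW hfC
    obtain ⟨g', hg', hgf'⟩ := hWf (f x) hfC
    have : x = g' := hfinj' x g' hdx (le_trans hg'.1 (by omega)) hgf'.symm
    exact hxnW (this ▸ hg')
  -- the edge associated to a group element
  have hedge : ∀ x : Γ, (cayleyGraph Γ S).dist 1 x⁻¹ ≤ K →
      (cayleyGraph Γ S).dist 1 (x⁻¹ * s) ≤ K →
      (f x⁻¹ ∈ C ∧ f (x⁻¹ * s) ∉ C ∨ f x⁻¹ ∉ C ∧ f (x⁻¹ * s) ∈ C) →
      s(f x⁻¹, f (x⁻¹ * s)) ∈ BD := by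
    intro x hd1 hd2 hcase
    have hcomp : f (x⁻¹ * s) = lab s (f x⁻¹) := hfcompat x⁻¹ (by omega) s hs
    have hne : f x⁻¹ ≠ f (x⁻¹ * s) := by
      rcases hcase with ⟨h1, h2⟩ | ⟨h1, h2⟩
      · exact fun h => h2 (h ▸ h1)
      · exact fun h => h1 (h.symm ▸ h2)
    have hGadj : G.Adj (f x⁻¹) (f (x⁻¹ * s)) := by
      rw [hGdef]
      simp only [labGraph, SimpleGraph.fromRel_adj]
      exact ⟨hne, Or.inl ⟨s, hs, hcomp⟩⟩
    have heE : s(f x⁻¹, f (x⁻¹ * s)) ∈ En := by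
      by_contra hnot
      have hHadj : H.Adj (f x⁻¹) (f (x⁻¹ * s)) := by
        rw [hHdef, SimpleGraph.deleteEdges_adj]
        exact ⟨hGadj, hnot⟩
      rcases hcase with ⟨h1, h2⟩ | ⟨h1, h2⟩
      · exact h2 (hCadj h1 hHadj)
      · exact h1 (hCadj h2 hHadj.symm)
    rcases hcase with ⟨h1, -⟩ | ⟨-, h1⟩
    · exact ⟨heE, f x⁻¹, Sym2.mem_mk_left _ _, h1⟩
    · exact ⟨heE, f (x⁻¹ * s), Sym2.mem_mk_right _ _, h1⟩
  -- Direction 1 : sF \ F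
  have hD1 : ((((fun x : Γ => s * x) '' F) \ F).ncard : ℝ) ≤ (BD.ncard : ℝ) := by
    have hstep : ∀ x ∈ (((fun x : Γ => s * x) '' F) \ F),
        (cayleyGraph Γ S).dist 1 (x⁻¹ * s) ≤ K - 1 ∧ f (x⁻¹ * s) ∈ C ∧ f x⁻¹ ∉ C ∧
          s(f x⁻¹, f (x⁻¹ * s)) ∈ BD := by
      rintro x ⟨hx1, hx2⟩
      have hxW : x⁻¹ * s ∈ W := by
        obtain ⟨y, hy, rfl⟩ := hx1
        have heq : (s * y)⁻¹ * s = y⁻¹ := by group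
        rw [heq]
        exact (hFmem y).mp hy
      have hxnW : x⁻¹ ∉ W := fun hc => hx2 ((hFmem x).mpr hc)
      obtain ⟨hd1, hfC⟩ := hxW
      have hdx : (cayleyGraph Γ S).dist 1 x⁻¹ ≤ K := by
        have h := cayley_dist_mul_inv_le hSgen hs (x⁻¹ * s)
        have heq : x⁻¹ * s * s⁻¹ = x⁻¹ := by group
        rw [heq] at h
        omega
      have huC : f x⁻¹ ∉ C := hnotinC x⁻¹ hdx hxnW
      exact ⟨hd1, hfC, huC, hedge x hdx (by omega) (Or.inr ⟨huC, hfC⟩)⟩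
    apply Nat.cast_le.mpr
    apply Set.ncard_le_ncard_of_injOn (fun x => s(f x⁻¹, f (x⁻¹ * s)))
    · intro x hx
      exact (hstep x hx).2.2.2
    · intro x₁ hx₁ x₂ hx₂ he
      obtain ⟨hd1, hfC1, hnC1, -⟩ := hstep x₁ hx₁
      obtain ⟨hd2, hfC2, hnC2, -⟩ := hstep x₂ hx₂
      rcases Sym2.eq_iff.mp he with ⟨-, h2⟩ | ⟨h1, h2⟩
      · have heq := hfinj' (x₁⁻¹ * s) (x₂⁻¹ * s) (by omega) (by omega) h2
        have hinv : x₁⁻¹ = x₂⁻¹ := mul_right_cancel heq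
        exact inv_injective hinv
      · rw [h1] at hnC1
        exact absurd hfC2 hnC1
  -- Direction 2 : F \ sF
  have hD2 : ((F \ ((fun x : Γ => s * x) '' F)).ncard : ℝ) ≤ (BD.ncard : ℝ) := by
    have hstep : ∀ x ∈ (F \ ((fun x : Γ => s * x) '' F)),
        (cayleyGraph Γ S).dist 1 x⁻¹ ≤ K - 1 ∧ f x⁻¹ ∈ C ∧ f (x⁻¹ * s) ∉ C ∧
          s(f x⁻¹, f (x⁻¹ * s)) ∈ BD := by
      rintro x ⟨hx1, hx2⟩
      have hxW : x⁻¹ ∈ W := (hFmem x).mp hx1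
      have hxnW : x⁻¹ * s ∉ W := by
        intro hc
        apply hx2
        refine ⟨s⁻¹ * x, ?_, by group⟩
        apply (hFmem (s⁻¹ * x)).mpr
        have heq : (s⁻¹ * x)⁻¹ = x⁻¹ * s := by group
        rw [heq]
        exact hc
      obtain ⟨hd1, hfC⟩ := hxW
      have hdxs : (cayleyGraph Γ S).dist 1 (x⁻¹ * s) ≤ K := by
        have h := cayley_dist_mul_le hSgen hs x⁻¹
        omega
      have hvC : f (x⁻¹ * s) ∉ C := hnotinC (x⁻¹ * s) hdxs hxnW
      exact ⟨hd1, hfC, hvC, hedge x (by omega) hdxs (Or.inl ⟨hfC, hvC⟩)⟩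
    apply Nat.cast_le.mpr
    apply Set.ncard_le_ncard_of_injOn (fun x => s(f x⁻¹, f (x⁻¹ * s)))
    · intro x hx
      exact (hstep x hx).2.2.2
    · intro x₁ hx₁ x₂ hx₂ he
      obtain ⟨hd1, hfC1, hnC1, -⟩ := hstep x₁ hx₁
      obtain ⟨hd2, hfC2, hnC2, -⟩ := hstep x₂ hx₂
      rcases Sym2.eq_iff.mp he with ⟨h1, -⟩ | ⟨h1, h2⟩
      · have heq := hfinj' x₁⁻¹ x₂⁻¹ (by omega) (by omega) h1
        exact inv_injective heq
      · rw [h1] at hfC1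
        exact absurd hfC1 hnC2
  -- combine
  have hsd : symmDiff ((fun x : Γ => s * x) '' F) F =
      (((fun x : Γ => s * x) '' F) \ F) ∪ (F \ ((fun x : Γ => s * x) '' F)) := by
    rw [Set.symmDiff_def]
  have hsdcard : ((symmDiff ((fun x : Γ => s * x) '' F) F).ncard : ℝ)
      ≤ (BD.ncard : ℝ) + (BD.ncard : ℝ) := by
    rw [hsd]
    have h := Set.ncard_union_le (((fun x : Γ => s * x) '' F) \ F)
      (F \ ((fun x : Γ => s * x) '' F))
    have h' : (((((fun x : Γ => s * x) '' F) \ F) ∪ (F \ ((fun x : Γ => s * x) '' F))).ncard : ℝ)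
        ≤ ((((fun x : Γ => s * x) '' F) \ F).ncard : ℝ)
          + ((F \ ((fun x : Γ => s * x) '' F)).ncard : ℝ) := by
      exact_mod_cast h
    linarith
  have hCge : (1:ℝ) ≤ (C.ncard : ℝ) := by exact_mod_cast hCpos
  rw [hFcard]
  calc ((symmDiff ((fun x : Γ => s * x) '' F) F).ncard : ℝ)
      ≤ (BD.ncard : ℝ) + (BD.ncard : ℝ) := hsdcard
    _ ≤ ε / 4 * (C.ncard : ℝ) + ε / 4 * (C.ncard : ℝ) := by
        linarith [hbound]
    _ < ε * (C.ncard : ℝ) := by nlinarith [hε, hCge]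


/-- If a sofic approximation of a finitely generated group is hyperfinite, then the group
is amenable. -/
theorem stmt12 {Γ : Type} [Group Γ]
    (S : Set Γ) (hSfin : S.Finite) (hSgen : Subgroup.closure S = ⊤)
    {V : ℕ → Type} (Gs : GraphSeq V) (lab : ∀ n, Γ → V n → V n)
    (hsofic : IsSoficApprox S Gs lab)
    (hhyp : Gs.hyperfinite) : FolnerAmenable S := by
  classical
  intro ε hε
  obtain ⟨hlab, hBS⟩ := hsofic
  obtain ⟨K, hK, E, hEsub, hElim, hcomp⟩ := hhyp (ε/32) (by positivity)
  set D := Gs.degBound with hD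
  set s0 := S.ncard with hs0
  set fK := (D + 1)^K with hfK
  set cβ := (1 + s0) * fK with hcβ
  have hfKpos : 0 < fK := by positivity
  have hcβpos : 0 < cβ := by positivity
  have hv1 : ∀ᶠ n in atTop, 1 ≤ Nat.card (V n) := Gs.card_tendsto.eventually_ge_atTop 1
  have hbddE : ∀ n, ((E n).ncard : ℝ) / (Nat.card (V n) : ℝ) ≤ (D : ℝ) := by
    intro n
    haveI := Gs.finite n
    exact edge_density_bound (Gs.G n) D (Gs.deg_le n) (E n) (hEsub n)
  have hE' : ∀ᶠ n in atTop, ((E n).ncard : ℝ) / (Nat.card (V n) : ℝ) < ε/32 :=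
    eventually_lt_of_limsup_lt hElim (isBoundedUnder_of ⟨(D:ℝ), hbddE⟩)
  have hBSK := hBS (K+1)
  have hδpos : (0:ℝ) < 1/(2*(cβ:ℝ)) := by positivity
  have hbadfrac : ∀ᶠ n in atTop,
      1 - 1/(2*(cβ:ℝ)) <
        (Nat.card {x : V n // ballIso S (lab n) x (K+1)} : ℝ) / (Nat.card (V n) : ℝ) :=
    hBSK.eventually (eventually_gt_nhds (by linarith))
  obtain ⟨n, hn1, hnE, hnfrac⟩ := (hv1.and (hE'.and hbadfrac)).exists
  haveI : Finite (V n) := Gs.finite n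
  set Gn : SimpleGraph (V n) := labGraph S (lab n) with hGn
  have hGeq : Gs.G n = Gn := hlab n
  have hconn : Gn.Connected := by rw [← hGeq]; exact Gs.connected n
  have hdeg : ∀ x, (Gn.neighborSet x).ncard ≤ D := by
    intro x
    rw [← hGeq]
    exact Gs.deg_le n x
  have hcompn : ∀ x : V n, {y | (Gn.deleteEdges (E n)).Reachable x y}.ncard ≤ K := by
    intro x
    rw [← hGeq]
    exact hcomp n x
  have hcardpos : (0:ℝ) < (Nat.card (V n) : ℝ) := by
    have : 0 < Nat.card (V n) := hn1
    exact_mod_cast this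
  set Bn : Set (V n) := {x | ¬ ballIso S (lab n) x (K+1)} with hBn
  have hgoodcard : Nat.card {x : V n // ballIso S (lab n) x (K+1)}
      = ({x : V n | ballIso S (lab n) x (K+1)}).ncard := Nat.card_coe_set_eq _
  have hcompl : ({x : V n | ballIso S (lab n) x (K+1)}).ncard + Bn.ncard = Nat.card (V n) := by
    have h := Set.ncard_add_ncard_compl ({x : V n | ballIso S (lab n) x (K+1)})
    rw [Set.compl_setOf] at h
    exact h
  have hBnbound : 2 * (cβ:ℝ) * (Bn.ncard : ℝ) ≤ (Nat.card (V n) : ℝ) := by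
    have h1 := hnfrac
    rw [hgoodcard] at h1
    have h2 : (1 - 1/(2*(cβ:ℝ))) * (Nat.card (V n):ℝ)
        < (({x : V n | ballIso S (lab n) x (K+1)}).ncard : ℝ) :=
      (lt_div_iff₀ hcardpos).mp h1
    have h4 : (({x : V n | ballIso S (lab n) x (K+1)}).ncard : ℝ) + (Bn.ncard:ℝ)
        = (Nat.card (V n):ℝ) := by exact_mod_cast hcompl
    have h5 : (Bn.ncard:ℝ) < 1/(2*(cβ:ℝ)) * (Nat.card (V n):ℝ) := by nlinarith
    have h6 : 2*(cβ:ℝ) * (Bn.ncard:ℝ) < 2*(cβ:ℝ) * (1/(2*(cβ:ℝ)) * (Nat.card (V n):ℝ)) :=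
      mul_lt_mul_of_pos_left h5 (by positivity)
    have h7 : 2*(cβ:ℝ) * (1/(2*(cβ:ℝ)) * (Nat.card (V n):ℝ)) = (Nat.card (V n):ℝ) := by
      have : (cβ:ℝ) ≠ 0 := by positivity
      field_simp
    linarith
  set Bad2 : Set (V n) :=
    {u | ∃ s ∈ S, ∃ v w : V n, v ≠ w ∧ lab n s v = u ∧ lab n s w = u} with hBad2
  have hBad2card : Bad2.ncard ≤ s0 * Bn.ncard := by
    have hBU : Bad2 = ⋃ s ∈ S, {u | ∃ v w : V n, v ≠ w ∧ lab n s v = u ∧ lab n s w = u} := by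
      ext u
      constructor
      · rintro ⟨s, hsS, hrest⟩
        exact Set.mem_biUnion hsS hrest
      · intro hu
        rw [Set.mem_iUnion₂] at hu
        obtain ⟨s, hsS, hrest⟩ := hu
        exact ⟨s, hsS, hrest⟩
    rw [hBU]
    refine le_trans (ncard_biUnion_le_mul hSfin _ Bn.ncard ?_) (le_of_eq (by rw [hs0]))
    intro s hsS
    have h1 := card_multi_add_card_range_le (lab n s)
    have h2 : {x : V n | ballIso S (lab n) x (K+1)} ⊆ Set.range (lab n s) := by
      intro u hu
      exact good_mem_range hSgen hK hu hsS
    have h3 : ({x : V n | ballIso S (lab n) x (K+1)}).ncard ≤ (Set.range (lab n s)).ncard :=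
      Set.ncard_le_ncard h2 (Set.toFinite _)
    omega
  set X : Set (V n) := {x | ∀ u, Gn.dist x u ≤ K →
      (ballIso S (lab n) u (K+1) ∧
        ∀ s ∈ S, ∀ v w : V n, lab n s v = u → lab n s w = u → v = w)} with hX
  have hXc : Xᶜ ⊆ ⋃ u ∈ (Bn ∪ Bad2), {y | ∃ p : Gn.Walk u y, p.length ≤ K} := by
    intro x hx
    simp only [hX, Set.mem_compl_iff, Set.mem_setOf_eq] at hx
    push_neg at hx
    obtain ⟨u, hud, hu2⟩ := hx
    have humem : u ∈ Bn ∪ Bad2 := by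
      by_cases hball : ballIso S (lab n) u (K+1)
      · right
        obtain ⟨s, hsS, v, w, hv, hw, hvw⟩ := hu2 hball
        exact ⟨s, hsS, v, w, hvw, hv, hw⟩
      · left
        exact hball
    refine Set.mem_biUnion humem ?_
    obtain ⟨p, hp⟩ := (hconn.preconnected u x).exists_walk_length_eq_dist
    exact ⟨p, by rw [hp, SimpleGraph.dist_comm]; exact hud⟩
  have hXccard : Xᶜ.ncard ≤ cβ * Bn.ncard := by
    calc Xᶜ.ncard ≤ (Bn ∪ Bad2).ncard * fK :=
          le_trans (Set.ncard_le_ncard hXc (Set.toFinite _))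
            (ncard_biUnion_le_mul (Set.toFinite _) _ fK (fun u _ => reachSet_bound Gn D hdeg K u))
      _ ≤ (Bn.ncard + Bad2.ncard) * fK :=
          Nat.mul_le_mul_right _ (Set.ncard_union_le _ _)
      _ ≤ (Bn.ncard + s0 * Bn.ncard) * fK :=
          Nat.mul_le_mul_right _ (by omega)
      _ = cβ * Bn.ncard := by rw [hcβ]; ring
  have hXcard : (Nat.card (V n) : ℝ) ≤ 2 * (X.ncard : ℝ) := by
    have h1 := Set.ncard_add_ncard_compl X
    have h2 : (X.ncard:ℝ) + (Xᶜ.ncard:ℝ) = (Nat.card (V n):ℝ) := by exact_mod_cast h1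
    have h3 : (Xᶜ.ncard : ℝ) ≤ (cβ:ℝ) * (Bn.ncard:ℝ) := by exact_mod_cast hXccard
    linarith
  have hXne : X.Nonempty := by
    rw [Set.nonempty_iff_ne_empty]
    intro h
    rw [h, Set.ncard_empty] at hXcard
    norm_num at hXcard
    linarith
  have hcount : 2 * ((E n).ncard : ℝ) ≤ ε/4 * (X.ncard : ℝ) := by
    have h1 : ((E n).ncard:ℝ) < ε/32 * (Nat.card (V n):ℝ) := by
      have := hnE
      rw [div_lt_iff₀ hcardpos] at this
      exact this
    have h2 : ε/16 * (Nat.card (V n):ℝ) ≤ ε/16 * (2 * (X.ncard:ℝ)) :=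
      mul_le_mul_of_nonneg_left hXcard (by positivity)
    have h3 : (0:ℝ) ≤ (X.ncard:ℝ) := by positivity
    linarith
  obtain ⟨x₀, hx₀X, hx₀b⟩ :=
    exists_small_boundary (Gn.deleteEdges (E n)) (E n) X hXne ε hε hcount
  exact key2 S hSgen (lab n) K hK (E n) x₀ (hcompn x₀) hx₀X ε hε hx₀b
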